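/- Let t be an even positive natural number and let s be a natural number with s ≥ 2t. Then s can be written as a sum of at most three positive natural numbers each coprime to t. -/

import Mathlib

lemma cast_sum_helper (m A B s : ℕ) [NeZero m] (h : A + B = s + m) :
    ((A : ZMod m)) + (B : ZMod m) = (s : ZMod m) := by
  rw [← Nat.cast_add, h, Nat.cast_add, ZMod.natCast_self, add_zero]

lemma isUnit_pair {M N : Type*} [Monoid M] [Monoid N] {x : M} {y : N}
    (hx : IsUnit x) (hy : IsUnit y) : IsUnit (x, y) := by
  obtain ⟨u, rfl⟩ := hx
  obtain ⟨v, rfl⟩ := hy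
  exact ⟨⟨((u : M), (v : N)), ((↑u⁻¹ : M), (↑v⁻¹ : N)), by ext <;> simp, by ext <;> simp⟩, rfl⟩

lemma zmod_sum_two_units : ∀ t : ℕ, 0 < t → ∀ s : ℕ, (Even t → Even s) →
    ∃ a b : ZMod t, IsUnit a ∧ IsUnit b ∧ a + b = (s : ZMod t) := by
  intro t
  induction t using Nat.recOnPosPrimePosCoprime with
  | prime_pow p n hpp hn =>
      intro _ s hpar
      have hp' : Nat.Prime p := hpp
      haveI : NeZero (p ^ n) := ⟨(pow_pos hp'.pos n).ne'⟩
      have hpn2 : 2 ≤ p ^ n := by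
        calc 2 ≤ p := hp'.two_le
        _ ≤ p ^ n := Nat.le_self_pow hn.ne' p
      rcases hp'.eq_two_or_odd' with h2 | hodd
      · subst h2
        have hse : Even s := hpar (Nat.even_pow.mpr ⟨even_two, hn.ne'⟩)
        refine ⟨1, ((s + 2 ^ n - 1 : ℕ) : ZMod (2 ^ n)), isUnit_one, ?_, ?_⟩
        · rw [ZMod.isUnit_iff_coprime]
          have hodd' : Odd (s + 2 ^ n - 1) := by
            have h2n : 2 ∣ 2 ^ n := dvd_pow_self 2 hn.ne'
            rcases hse with ⟨k, hk⟩
            rcases h2n with ⟨m, hm⟩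
            exact ⟨k + m - 1, by omega⟩
          exact Nat.Coprime.pow_right _ (hodd'.coprime_two_right)
        · have := cast_sum_helper (2 ^ n) 1 (s + 2 ^ n - 1) s (by omega)
          simpa using this
      · have hpdvd : p ∣ p ^ n := dvd_pow_self p hn.ne'
        by_cases hs1 : s % p = 1
        · have hsge1 : 1 ≤ s := by
            rcases Nat.eq_zero_or_pos s with rfl | h
            · simp at hs1
            · exact h
          refine ⟨((2 : ℕ) : ZMod (p ^ n)), ((s + p ^ n - 2 : ℕ) : ZMod (p ^ n)), ?_, ?_, ?_⟩
          · rw [ZMod.isUnit_iff_coprime]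
            exact Nat.Coprime.pow_right _ (Nat.coprime_two_left.mpr hodd)
          · rw [ZMod.isUnit_iff_coprime]
            refine Nat.Coprime.pow_right _ ((Nat.Prime.coprime_iff_not_dvd hp').mpr ?_).symm
            intro hdvd
            have hs1' : p ∣ s - 1 := by
              have : s % p = 1 % p := by
                rw [hs1, Nat.mod_eq_of_lt hp'.one_lt]
              exact (Nat.modEq_iff_dvd' (by omega)).mp this.symm
            have h1 : p ∣ s + p ^ n - 1 := by
              have : s + p ^ n - 1 = (s - 1) + p ^ n := by omega
              rw [this]; exact Nat.dvd_add hs1' hpdvd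
            have : p ∣ 1 := by
              have := Nat.dvd_sub h1 hdvd
              simpa [show s + p ^ n - 1 - (s + p ^ n - 2) = 1 by omega] using this
            exact hp'.one_lt.ne' (Nat.dvd_one.mp this)
          · exact cast_sum_helper (p ^ n) 2 (s + p ^ n - 2) s (by omega)
        · refine ⟨((1 : ℕ) : ZMod (p ^ n)), ((s + p ^ n - 1 : ℕ) : ZMod (p ^ n)), ?_, ?_, ?_⟩
          · simpa using isUnit_one
          · rw [ZMod.isUnit_iff_coprime]
            refine Nat.Coprime.pow_right _ ((Nat.Prime.coprime_iff_not_dvd hp').mpr ?_).symm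
            intro hdvd
            rcases Nat.eq_zero_or_pos s with rfl | hs0
            · have : p ∣ 1 := by
                have := Nat.dvd_sub hpdvd (by simpa using hdvd)
                simpa [show p ^ n - (p ^ n - 1) = 1 by omega] using this
              exact hp'.one_lt.ne' (Nat.dvd_one.mp this)
            · have hs1' : p ∣ s - 1 := by
                have : s - 1 = (s + p ^ n - 1) - p ^ n := by omega
                rw [this]; exact Nat.dvd_sub hdvd hpdvd
              have : s % p = 1 := by
                obtain ⟨k, hk⟩ := hs1'
                have hs' : s = p * k + 1 := by omega
                rw [hs', Nat.mul_add_mod, Nat.mod_eq_of_lt hp'.one_lt]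
              exact hs1 this
          · exact cast_sum_helper (p ^ n) 1 (s + p ^ n - 1) s (by omega)
  | zero => intro h; omega
  | one =>
      intro _ s _
      exact ⟨0, 0, isUnit_of_subsingleton 0, isUnit_of_subsingleton 0, Subsingleton.elim _ _⟩
  | coprime a b ha hb hab iha ihb =>
      intro hpos s hpar
      obtain ⟨a1, b1, ha1, hb1, h1⟩ := iha (by omega) s (fun he => hpar (he.mul_right b))
      obtain ⟨a2, b2, ha2, hb2, h2⟩ := ihb (by omega) s (fun he => hpar (he.mul_left a))
      let e := ZMod.chineseRemainder hab
      refine ⟨e.symm (a1, a2), e.symm (b1, b2), ?_, ?_, ?_⟩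
      · exact (isUnit_pair ha1 ha2).map (e.symm : ZMod a × ZMod b →+* ZMod (a * b))
      · exact (isUnit_pair hb1 hb2).map (e.symm : ZMod a × ZMod b →+* ZMod (a * b))
      · rw [← map_add]
        have h3 : (a1, a2) + (b1, b2) = ((s : ZMod a), (s : ZMod b)) := by
          rw [Prod.mk_add_mk, h1, h2]
        have h4 : ((s : ZMod a), (s : ZMod b)) = ((s : ℕ) : ZMod a × ZMod b) := by
          ext <;> simp
        rw [h3, h4, map_natCast]

lemma split_two (t s : ℕ) (ht0 : 0 < t) (ht : Even t) (hts : t ≤ s) (hse : Even s) :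
    ∃ A B : ℕ, 0 < A ∧ 0 < B ∧ Nat.gcd A t = 1 ∧ Nat.gcd B t = 1 ∧ A + B = s := by
  haveI : NeZero t := ⟨ht0.ne'⟩
  have ht2 : 2 ≤ t := by rcases ht with ⟨k, hk⟩; omega
  haveI : Fact (1 < t) := ⟨ht2⟩
  obtain ⟨a, b, hua, hub, hab⟩ := zmod_sum_two_units t ht0 s (fun _ => hse)
  set A := a.val with hA
  have hAcast : ((A : ℕ) : ZMod t) = a := ZMod.natCast_rightInverse a
  have hAlt : A < t := ZMod.val_lt a
  have hA0 : 0 < A := by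
    rcases Nat.eq_zero_or_pos A with h | h
    · exact absurd hua (by rw [(ZMod.val_eq_zero a).mp h]; exact fun h' => h'.ne_zero rfl)
    · exact h
  refine ⟨A, s - A, hA0, by omega, ?_, ?_, by omega⟩
  · exact (ZMod.isUnit_iff_coprime A t).mp (by rwa [hAcast])
  · refine (ZMod.isUnit_iff_coprime (s - A) t).mp ?_
    have : ((s - A : ℕ) : ZMod t) = b := by
      have hsum : ((A : ℕ) : ZMod t) + ((s - A : ℕ) : ZMod t) = (s : ZMod t) := by
        rw [← Nat.cast_add]; congr 1; omega
      rw [hAcast, ← hab] at hsum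
      exact add_left_cancel hsum
    rwa [this]

theorem sum_of_at_most_three_coprime (t s : ℕ) (ht : Even t) (ht0 : 0 < t)
    (hs : 2 * t ≤ s) :
    ∃ l : List ℕ, l.length ∈ ({1, 2, 3} : Set ℕ) ∧
      (∀ a ∈ l, 0 < a ∧ Nat.gcd a t = 1) ∧ l.sum = s := by
  have ht2 : 2 ≤ t := by rcases ht with ⟨k, hk⟩; omega
  rcases Nat.even_or_odd s with hse | hso
  · obtain ⟨A, B, hA, hB, hA', hB', hab⟩ := split_two t s ht0 ht (by omega) hse
    refine ⟨[A, B], by simp, ?_, by simp [hab]⟩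
    intro x hx
    simp only [List.mem_cons, List.not_mem_nil, or_false] at hx
    rcases hx with rfl | rfl <;> exact ⟨by omega, by assumption⟩
  · have hse : Even (s - 1) := by rcases hso with ⟨k, hk⟩; exact ⟨k, by omega⟩
    obtain ⟨A, B, hA, hB, hA', hB', hab⟩ := split_two t (s - 1) ht0 ht (by omega) hse
    refine ⟨[1, A, B], by simp, ?_, by simp only [List.sum_cons, List.sum_nil]; omega⟩
    intro x hx
    simp only [List.mem_cons, List.not_mem_nil, or_false] at hx
    rcases hx with rfl | rfl | rfl
    · exact ⟨one_pos, Nat.gcd_one_left t⟩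
    · exact ⟨hA, hA'⟩
    · exact ⟨hB, hB'⟩
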